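/- Let U(t) be the formal power series in t (over the ring of formal power series in another variable, or with a parameter v with zero constant term) satisfying t = U(t) / ((1 - U(t)) (U(t) + v)). Then for every p ≥ 1, the coefficient of t^p in U(t) equals h_p(v), where h_p(u) = ∑_{j=1}^{p} ((-1)^{j-1}/p) binom(p,j) binom(p,j-1) u^j. -/

import Mathlib

private def kk (p m : ℕ) : ℚ :=
  match m with
  | 0 => 0
  | j+1 => (-1)^j * (p.choose (j+1)) * (p.choose j)

private noncomputable def Kp (p : ℕ) : Polynomial ℚ :=
  ∑ j ∈ Finset.Icc 1 p,
    Polynomial.C ((-1:ℚ)^(j-1) * (p.choose j) * (p.choose (j-1))) * Polynomial.X ^ j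

private lemma coeff_Kp (p m : ℕ) : (Kp p).coeff m = kk p m := by
  rw [Kp, Polynomial.finset_sum_coeff]
  simp only [Polynomial.coeff_C_mul, Polynomial.coeff_X_pow, mul_ite, mul_one, mul_zero]
  match m with
  | 0 =>
    rw [Finset.sum_eq_zero]
    · simp [kk]
    · intro j hj; simp only [Finset.mem_Icc] at hj; rw [if_neg (by omega)]
  | j+1 =>
    rw [Finset.sum_eq_single (j+1)]
    · rw [if_pos rfl]
      by_cases hp : j+1 ≤ p
      · simp [kk]
      · have h1 : p.choose (j+1) = 0 := Nat.choose_eq_zero_of_lt (by omega)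
        simp [kk, h1]
    · intro b _ hb; rw [if_neg (fun h => hb h.symm)]
    · intro hm
      simp only [Finset.mem_Icc] at hm
      have h1 : p.choose (j+1) = 0 := Nat.choose_eq_zero_of_lt (by omega)
      rw [if_pos rfl]; simp [kk, h1]

private lemma absorb (q k : ℕ) :
    (q.choose (k+1) : ℚ) * (k+1) = q.choose k * ((q:ℚ) - k) := by
  rcases le_or_gt k q with h | h
  · have hc : ((q.choose (k+1) * (k+1) : ℕ) : ℚ) = ((q.choose k * (q - k) : ℕ) : ℚ) := by
      rw [Nat.choose_succ_right_eq]
    push_cast [Nat.cast_sub h] at hc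
    linarith [hc]
  · have h1 : q.choose (k+1) = 0 := Nat.choose_eq_zero_of_lt (by omega)
    have h2 : q.choose k = 0 := Nat.choose_eq_zero_of_lt h
    simp [h1, h2]

private lemma pascalQ (n k : ℕ) :
    ((n+1).choose (k+1) : ℚ) = n.choose k + n.choose (k+1) := by
  rw [Nat.choose_succ_succ]; push_cast; ring

private lemma keyk (q m : ℕ) :
    ((q:ℚ)+1)*((q:ℚ)+3)*kk (q+2) m
      = (2*(q:ℚ)+3)*((q:ℚ)+2)*(kk (q+1) m - kk (q+1) (m-1))
        - ((q:ℚ)+2)*((q:ℚ)+1)*(kk q m + 2*kk q (m-1) + kk q (m-2)) := by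
  match m with
  | 0 => simp [kk]
  | 1 => simp [kk]; ring
  | 2 =>
    simp only [kk, show (2:ℕ)-1 = 1 from rfl, show (2:ℕ)-2 = 0 from rfl]
    have h1 := pascalQ (q+1) 1
    have h2 := pascalQ q 1
    push_cast at h1 h2 ⊢
    rw [h1, h2]
    simp [Nat.choose_one_right]
    ring
  | (r+3) =>
    simp only [kk, show ∀ r:ℕ, r+3-1 = r+2 from fun r => rfl,
      show ∀ r:ℕ, r+3-2 = r+1 from fun r => rfl]
    have h1 := pascalQ q (r+2)
    have h2 := pascalQ q (r+1)
    have h3 := pascalQ q r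
    have h4 := pascalQ (q+1) (r+2)
    have h5 := pascalQ (q+1) (r+1)
    have a1 := absorb q r
    have a2 := absorb q (r+1)
    have a3 := absorb q (r+2)
    push_cast at h1 h2 h3 h4 h5 a1 a2 a3 ⊢
    rw [h4, h5, h1, h2, h3]
    set w := (q.choose r : ℚ)
    set x := (q.choose (r+1) : ℚ)
    set y := (q.choose (r+2) : ℚ)
    set z := (q.choose (r+3) : ℚ)
    set n : ℚ := (r:ℚ)+2 with hn
    linear_combination
      ((-1:ℚ)^r * (x - 2*z - n*y - n*z - (q:ℚ)*z)) * a1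
      + ((-1:ℚ)^r * (-w - x + y - n*y - n*z + (q:ℚ)*y)) * a2
      + ((-1:ℚ)^r * (-w - 2*x - y + n*w + 2*n*x + n*y)) * a3

private lemma coeff_X_mul_Kp (a m : ℕ) :
    (Polynomial.X * Kp a).coeff m = kk a (m-1) := by
  match m with
  | 0 => simp [Polynomial.mul_coeff_zero, kk]
  | n+1 => rw [Polynomial.coeff_X_mul, coeff_Kp]; rfl

private lemma coeff_X_sq_mul_Kp (a m : ℕ) :
    (Polynomial.X^2 * Kp a).coeff m = kk a (m-2) := by
  match m with
  | 0 => simp [Polynomial.coeff_X_pow_mul, kk]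
  | 1 =>
    rw [show (Polynomial.X^2 * Kp a) = Polynomial.X * (Polynomial.X * Kp a) by ring,
      Polynomial.coeff_X_mul, coeff_X_mul_Kp]
  | n+2 => rw [Polynomial.coeff_X_pow_mul (Kp a) 2 n, coeff_Kp]; rfl

private lemma polyidK (q : ℕ) :
    Polynomial.C (((q:ℚ)+1)*((q:ℚ)+3)) * Kp (q+2)
      = Polynomial.C ((2*(q:ℚ)+3)*((q:ℚ)+2)) * ((1 - Polynomial.X) * Kp (q+1))
        - Polynomial.C (((q:ℚ)+2)*((q:ℚ)+1)) * ((1 + Polynomial.X)^2 * Kp q) := by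
  ext m
  have e1 : ((1 - Polynomial.X) * Kp (q+1)).coeff m = kk (q+1) m - kk (q+1) (m-1) := by
    rw [sub_mul, one_mul, Polynomial.coeff_sub, coeff_Kp, coeff_X_mul_Kp]
  have e2 : ((1 + Polynomial.X)^2 * Kp q).coeff m = kk q m + 2 * kk q (m-1) + kk q (m-2) := by
    rw [show (1 + Polynomial.X)^2 * Kp q
        = Kp q + 2 * (Polynomial.X * Kp q) + Polynomial.X^2 * Kp q by ring]
    simp only [Polynomial.coeff_add, Polynomial.coeff_ofNat_mul, coeff_Kp, coeff_X_mul_Kp,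
      coeff_X_sq_mul_Kp]
  simp only [Polynomial.coeff_sub, Polynomial.coeff_C_mul, e1, e2, coeff_Kp]
  exact keyk q m

open PowerSeries in
/-- Let `U(t)` be a formal power series in `t` over `ℚ[v]` with zero constant term,
satisfying `t = U(t) / ((1 - U(t)) (U(t) + v))`, i.e. `U = t (1 - U) (U + v)`.
Then `[t^p] U(t) = h_p(v) = ∑_{j=1}^{p} ((-1)^{j-1}/p) binom(p,j) binom(p,j-1) v^j`
for every `p ≥ 1`. -/
theorem stmt15 (U : PowerSeries (Polynomial ℚ))
    (h0 : PowerSeries.constantCoeff U = 0)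
    (hU : U = PowerSeries.X * (1 - U) * (U + PowerSeries.C Polynomial.X)) :
    ∀ p : ℕ, 1 ≤ p →
      PowerSeries.coeff p U =
        ∑ j ∈ Finset.Icc 1 p,
          Polynomial.C ((-1 : ℚ) ^ (j - 1) / p * (Nat.choose p j) * (Nat.choose p (j - 1))) *
            Polynomial.X ^ j := by
  have hQ : PowerSeries.X * U^2
      + (1 - PowerSeries.X + PowerSeries.X * PowerSeries.C Polynomial.X) * U
      = PowerSeries.X * PowerSeries.C Polynomial.X := by linear_combination hU
  have hQd := congrArg (fun f => d⁄dX (Polynomial ℚ) f) hQ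
  simp only [Derivation.leibniz, Derivation.leibniz_pow, map_add, map_sub,
    Derivation.map_one_eq_zero, PowerSeries.derivative_X, PowerSeries.derivative_C,
    smul_eq_mul] at hQd
  have hF2 : U^2 + 2*PowerSeries.X*U*(d⁄dX (Polynomial ℚ) U)
      + (PowerSeries.C Polynomial.X - 1)*U
      + (1 - PowerSeries.X + PowerSeries.X * PowerSeries.C Polynomial.X)
        * (d⁄dX (Polynomial ℚ) U)
      = PowerSeries.C Polynomial.X := by
    linear_combination hQd
  have hODE : PowerSeries.X * (d⁄dX (Polynomial ℚ) U)
      + PowerSeries.C (2*Polynomial.X - 2)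
        * (PowerSeries.X * (PowerSeries.X * (d⁄dX (Polynomial ℚ) U)))
      + PowerSeries.C ((1 + Polynomial.X)^2)
        * (PowerSeries.X * (PowerSeries.X * (PowerSeries.X * (d⁄dX (Polynomial ℚ) U))))
      + U + PowerSeries.C (Polynomial.X - 1) * (PowerSeries.X * U)
      = PowerSeries.C (2*Polynomial.X) * PowerSeries.X := by
    have c1 : PowerSeries.C (2*Polynomial.X - 2 : Polynomial ℚ)
        = 2 * PowerSeries.C Polynomial.X - 2 := by
      simp [map_sub, map_mul, map_ofNat]
    have c2 : PowerSeries.C ((1 + Polynomial.X)^2 : Polynomial ℚ)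
        = (1 + PowerSeries.C Polynomial.X)^2 := by
      simp [map_pow, map_add, map_one]
    have c3 : PowerSeries.C (Polynomial.X - 1 : Polynomial ℚ)
        = PowerSeries.C Polynomial.X - 1 := by
      simp [map_sub, map_one]
    have c4 : PowerSeries.C (2*Polynomial.X : Polynomial ℚ)
        = 2 * PowerSeries.C Polynomial.X := by
      simp [map_mul, map_ofNat]
    rw [c1, c2, c3, c4]
    linear_combination
      (2 - (1 - PowerSeries.X + PowerSeries.X * PowerSeries.C Polynomial.X)
        - 2*PowerSeries.X*U - 4*PowerSeries.X^2*(d⁄dX (Polynomial ℚ) U)) * hQ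
      + (PowerSeries.X * (2*PowerSeries.X*U
          + (1 - PowerSeries.X + PowerSeries.X * PowerSeries.C Polynomial.X))) * hF2
  have coeffT : ∀ n : ℕ,
      PowerSeries.coeff n (PowerSeries.X * (d⁄dX (Polynomial ℚ) U))
        = (n : Polynomial ℚ) * PowerSeries.coeff n U := by
    intro n
    cases n with
    | zero => simp
    | succ n =>
      rw [PowerSeries.coeff_succ_X_mul, PowerSeries.coeff_derivative]
      push_cast
      ring
  have g1 : PowerSeries.coeff 1 U = Polynomial.X := by
    conv_lhs => rw [hU, mul_assoc]
    rw [show (1:ℕ) = 0+1 from rfl, PowerSeries.coeff_succ_X_mul,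
      PowerSeries.coeff_zero_eq_constantCoeff, map_mul, map_sub, map_add, map_one, h0,
      PowerSeries.constantCoeff_C]
    ring
  have main : ∀ n : ℕ,
      (n : Polynomial ℚ) * PowerSeries.coeff n U = Kp n := by
    intro n
    induction n using Nat.strong_induction_on with
    | _ n IH =>
      rcases n with _ | n
      · simp [Kp]
      rcases n with _ | q
      · rw [g1]
        simp [Kp]
      · have IH1 := IH (q+1) (by omega)
        have IH0 := IH q (by omega)
        push_cast at IH1 IH0
        have hrec := congrArg (fun f => PowerSeries.coeff (q+2) f) hODE
        simp only [map_add, PowerSeries.coeff_C_mul, PowerSeries.coeff_succ_X_mul, coeffT,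
          PowerSeries.coeff_X] at hrec
        push_cast at hrec
        have pk := polyidK q
        simp only [map_add, map_mul, map_one, map_natCast, map_ofNat] at pk
        have hne : (((q:Polynomial ℚ))+1)*(((q:Polynomial ℚ))+3) ≠ 0 := by
          have h1 : ((q:Polynomial ℚ)+1) ≠ 0 := by
            have : (((q+1:ℕ)):Polynomial ℚ) ≠ 0 := Nat.cast_ne_zero.mpr (by omega)
            push_cast at this; exact this
          have h3 : ((q:Polynomial ℚ)+3) ≠ 0 := by
            have : (((q+3:ℕ)):Polynomial ℚ) ≠ 0 := Nat.cast_ne_zero.mpr (by omega)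
            push_cast at this; exact this
          exact mul_ne_zero h1 h3
        refine mul_left_cancel₀ hne ?_
        push_cast
        linear_combination
          (((q:Polynomial ℚ)+1)*((q:Polynomial ℚ)+2)) * hrec
          + (((q:Polynomial ℚ)+2)*(2*(q:Polynomial ℚ)+3)*(1 - Polynomial.X)) * IH1
          - (((q:Polynomial ℚ)+1)*((q:Polynomial ℚ)+2)*(1 + Polynomial.X)^2) * IH0
          - pk
  intro p hp
  have hne : ((p:Polynomial ℚ)) ≠ 0 := Nat.cast_ne_zero.mpr (by omega)
  refine mul_left_cancel₀ hne ?_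
  rw [main p, Finset.mul_sum, Kp]
  refine Finset.sum_congr rfl fun j hj => ?_
  have hp' : ((p:ℚ)) ≠ 0 := Nat.cast_ne_zero.mpr (by omega)
  rw [show ((p:Polynomial ℚ)) = Polynomial.C ((p:ℚ)) from (map_natCast _ p).symm,
    ← mul_assoc, ← Polynomial.C_mul]
  congr 1
  field_simp
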